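/- Let H be a real Hilbert space, A : H → 2^H a maximally monotone operator and B : H → H a β-cocoercive operator for some β > 0 such that zer(A + B) ≠ ∅. Then for all λ₁, λ₂ > 0, all γ₁, γ₂ ∈ (0, 2β), all x, y ∈ H and every x̄ ∈ zer(A + B), it holds that ‖λ₁ T_{λ₁,γ₁}(x) − λ₂ T_{λ₂,γ₂}(y)‖ ≤ 4‖x − y‖ + (4β|γ₁ − γ₂|/γ₁)‖B(x)‖ + (2|γ₁ − γ₂|/γ₁)‖x − x̄‖. -/

import Mathlib

open scoped InnerProductSpace
open Filter Asymptotics MeasureTheory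

variable {H : Type*} [NormedAddCommGroup H] [InnerProductSpace ℝ H] [CompleteSpace H]

/-- A set-valued operator `A : H → 2^H` is monotone. -/
def IsMonotoneOp (A : H → Set H) : Prop :=
  ∀ x y u v : H, u ∈ A x → v ∈ A y → 0 ≤ ⟪u - v, x - y⟫_ℝ

/-- A set-valued operator is maximally monotone: it is monotone and its graph is not properly
contained in the graph of another monotone operator. -/
def IsMaximallyMonotone (A : H → Set H) : Prop :=
  IsMonotoneOp A ∧
    ∀ A' : H → Set H, IsMonotoneOp A' → (∀ x, A x ⊆ A' x) → A' = A

/-- `B` is `β`-cocoercive. -/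
def IsCocoercive (β : ℝ) (B : H → H) : Prop :=
  ∀ x y : H, β * ‖B x - B y‖ ^ 2 ≤ ⟪B x - B y, x - y⟫_ℝ

/-- `J γ` is the resolvent `J_{γA}` of `A`, i.e. the single-valued, everywhere defined map
characterized by `y = J_{γA}(x) ↔ (x − y)/γ ∈ A(y)`. -/
def IsResolventFamily (A : H → Set H) (J : ℝ → H → H) : Prop :=
  ∀ γ : ℝ, 0 < γ → ∀ x y : H, J γ x = y ↔ γ⁻¹ • (x - y) ∈ A y

/-- `T_{λ,γ} = (1/λ)[Id − J_{γA}∘(Id − γB)]`. -/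
noncomputable def Tmap (J : ℝ → H → H) (B : H → H) (lam gam : ℝ) (x : H) : H :=
  (1 / lam) • (x - J gam (x - gam • B x))

/-- The Yosida approximation `A_γ = (Id − J_{γA})/γ`. -/
noncomputable def yosida (J : ℝ → H → H) (gam : ℝ) (u : H) : H :=
  (1 / gam) • (u - J gam u)

/-- `zer(A + B) = {x ∈ H : 0 ∈ Ax + Bx}`. -/
def zerSum (A : H → Set H) (B : H → H) : Set H := {x | ∃ a ∈ A x, a + B x = 0}


set_option linter.unusedSectionVars false in
lemma resolvent_nonexp' {A : H → Set H} {J : ℝ → H → H}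
    (hA : IsMonotoneOp A) (hJ : IsResolventFamily A J)
    {γ : ℝ} (hγ : 0 < γ) (u v : H) : ‖J γ u - J γ v‖ ≤ ‖u - v‖ := by
  set p := J γ u with hp
  set q := J γ v with hq
  have hpA : γ⁻¹ • (u - p) ∈ A p := (hJ γ hγ u p).mp hp.symm
  have hqA : γ⁻¹ • (v - q) ∈ A q := (hJ γ hγ v q).mp hq.symm
  have hmono := hA p q _ _ hpA hqA
  have h1 : γ⁻¹ • (u - p) - γ⁻¹ • (v - q) = γ⁻¹ • ((u - v) - (p - q)) := by
    rw [← smul_sub]; congr 1; abel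
  rw [h1, real_inner_smul_left] at hmono
  have h2 : 0 ≤ ⟪(u - v) - (p - q), p - q⟫_ℝ := by
    have hγi : 0 < γ⁻¹ := inv_pos.mpr hγ
    nlinarith
  rw [inner_sub_left, real_inner_self_eq_norm_sq] at h2
  have h3 := real_inner_le_norm (u - v) (p - q)
  nlinarith [norm_nonneg (p - q), norm_nonneg (u - v)]

set_option linter.unusedSectionVars false in
lemma idB_nonexp' {B : H → H} {β : ℝ} (hB : IsCocoercive β B)
    {γ : ℝ} (hγ : 0 < γ) (hγ2 : γ ≤ 2 * β) (x y : H) :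
    ‖(x - γ • B x) - (y - γ • B y)‖ ≤ ‖x - y‖ := by
  have key : ‖(x - γ • B x) - (y - γ • B y)‖ ^ 2 ≤ ‖x - y‖ ^ 2 := by
    have h1 : (x - γ • B x) - (y - γ • B y) = (x - y) - γ • (B x - B y) := by
      rw [smul_sub]; abel
    rw [h1, @norm_sub_sq_real H _ _ (x - y) (γ • (B x - B y)),
      real_inner_smul_right, norm_smul]
    have hco := hB x y
    have hin : ⟪x - y, B x - B y⟫_ℝ = ⟪B x - B y, x - y⟫_ℝ := real_inner_comm _ _
    rw [Real.norm_eq_abs, abs_of_pos hγ]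
    nlinarith [mul_le_mul_of_nonneg_left hco (by positivity : (0:ℝ) ≤ 2 * γ),
      mul_nonneg (mul_nonneg (sub_nonneg.mpr hγ2) hγ.le) (sq_nonneg ‖B x - B y‖)]
  have h := Real.sqrt_le_sqrt key
  rwa [Real.sqrt_sq (norm_nonneg _), Real.sqrt_sq (norm_nonneg _)] at h

/-- estimate for `‖λ₁T_{λ₁,γ₁}(x) − λ₂T_{λ₂,γ₂}(y)‖`. -/
theorem lamT_estimate
    (A : H → Set H) (B : H → H) (β : ℝ) (hβ : 0 < β)
    (hA : IsMaximallyMonotone A) (hB : IsCocoercive β B)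
    (J : ℝ → H → H) (hJ : IsResolventFamily A J)
    (hzer : (zerSum A B).Nonempty)
    (lam₁ lam₂ gam₁ gam₂ : ℝ) (hlam₁ : 0 < lam₁) (hlam₂ : 0 < lam₂)
    (hgam₁ : gam₁ ∈ Set.Ioo 0 (2 * β)) (hgam₂ : gam₂ ∈ Set.Ioo 0 (2 * β))
    (x y xbar : H) (hxbar : xbar ∈ zerSum A B) :
    ‖lam₁ • Tmap J B lam₁ gam₁ x - lam₂ • Tmap J B lam₂ gam₂ y‖ ≤
      4 * ‖x - y‖ + 4 * β * |gam₁ - gam₂| / gam₁ * ‖B x‖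
        + 2 * |gam₁ - gam₂| / gam₁ * ‖x - xbar‖ := by
  obtain ⟨hγ₁, hγ₁2⟩ := hgam₁
  obtain ⟨hγ₂, hγ₂2⟩ := hgam₂
  obtain ⟨a, haA, ha⟩ := hxbar
  have hAmono := hA.1
  set u₁ := x - gam₁ • B x with hu₁
  set u₂ := x - gam₂ • B x with hu₂
  set P := J gam₁ u₁ with hPdef
  set Q := J gam₂ u₂ with hQdef
  set Qy := J gam₂ (y - gam₂ • B y) with hQydef
  -- rewrite the LHS
  have hL₁ : lam₁ • Tmap J B lam₁ gam₁ x = x - P := by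
    rw [Tmap, smul_smul, mul_one_div, div_self hlam₁.ne', one_smul]
  have hL₂ : lam₂ • Tmap J B lam₂ gam₂ y = y - Qy := by
    rw [Tmap, smul_smul, mul_one_div, div_self hlam₂.ne', one_smul]
  -- xbar is a fixed point
  have hfix : ∀ γ : ℝ, 0 < γ → J γ (xbar - γ • B xbar) = xbar := by
    intro γ hγ
    apply (hJ γ hγ _ xbar).mpr
    have h1 : γ⁻¹ • ((xbar - γ • B xbar) - xbar) = a := by
      rw [eq_neg_of_add_eq_zero_left ha] at haA ⊢
      rw [sub_sub_cancel_left, smul_neg, smul_smul, inv_mul_cancel₀ hγ.ne', one_smul]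
    rw [h1]; exact haA
  -- scaling identity : P is also a resolvent at parameter gam₂
  set v : H := (gam₂ / gam₁) • u₁ + (1 - gam₂ / gam₁) • P with hv
  have hscale : J gam₂ v = P := by
    apply (hJ gam₂ hγ₂ v P).mpr
    have h1 : v - P = (gam₂ / gam₁) • (u₁ - P) := by
      rw [hv, smul_sub]; module
    rw [h1, smul_smul]
    have h2 : gam₂⁻¹ * (gam₂ / gam₁) = gam₁⁻¹ := by field_simp
    rw [h2]
    exact (hJ gam₁ hγ₁ u₁ P).mp rfl
  -- bound ‖x - P‖
  have hxP : ‖x - P‖ ≤ 2 * ‖x - xbar‖ := by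
    have h1 : x - P = (x - xbar) + (J gam₁ (xbar - gam₁ • B xbar) - P) := by
      rw [hfix gam₁ hγ₁]; abel
    calc ‖x - P‖ ≤ ‖x - xbar‖ + ‖J gam₁ (xbar - gam₁ • B xbar) - P‖ := by
          rw [h1]; exact norm_add_le _ _
      _ ≤ ‖x - xbar‖ + ‖(xbar - gam₁ • B xbar) - u₁‖ :=
          add_le_add_right (resolvent_nonexp' hAmono hJ hγ₁ _ _) _
      _ ≤ ‖x - xbar‖ + ‖xbar - x‖ :=
          add_le_add_right (idB_nonexp' hB hγ₁ hγ₁2.le xbar x) _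
      _ = 2 * ‖x - xbar‖ := by rw [norm_sub_rev]; ring
  -- bound ‖u₁ - P‖
  have hu₁P : ‖u₁ - P‖ ≤ 2 * ‖x - xbar‖ + gam₁ * ‖B x‖ := by
    have h1 : u₁ - P = (x - P) - gam₁ • B x := by rw [hu₁]; abel
    calc ‖u₁ - P‖ ≤ ‖x - P‖ + ‖gam₁ • B x‖ := by rw [h1]; exact norm_sub_le _ _
      _ ≤ 2 * ‖x - xbar‖ + gam₁ * ‖B x‖ := by
          rw [norm_smul, Real.norm_eq_abs, abs_of_pos hγ₁]
          exact add_le_add_left hxP _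
  -- bound ‖Q - P‖
  have hQP : ‖Q - P‖ ≤ |gam₁ - gam₂| * ‖B x‖ + |gam₁ - gam₂| / gam₁ * ‖u₁ - P‖ := by
    have hsub : u₂ - v = (gam₁ - gam₂) • B x + ((gam₁ - gam₂) / gam₁) • (u₁ - P) := by
      rw [hu₂, hv, hu₁]
      match_scalars <;> field_simp <;> ring
    calc ‖Q - P‖ = ‖J gam₂ u₂ - J gam₂ v‖ := by rw [hscale]
      _ ≤ ‖u₂ - v‖ := resolvent_nonexp' hAmono hJ hγ₂ _ _
      _ ≤ ‖(gam₁ - gam₂) • B x‖ + ‖((gam₁ - gam₂) / gam₁) • (u₁ - P)‖ := by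
          rw [hsub]; exact norm_add_le _ _
      _ = |gam₁ - gam₂| * ‖B x‖ + |gam₁ - gam₂| / gam₁ * ‖u₁ - P‖ := by
          rw [norm_smul, norm_smul, Real.norm_eq_abs, Real.norm_eq_abs,
            abs_div, abs_of_pos hγ₁]
  -- bound ‖Q - Qy‖
  have hQQy : ‖Q - Qy‖ ≤ ‖x - y‖ :=
    le_trans (resolvent_nonexp' hAmono hJ hγ₂ _ _) (idB_nonexp' hB hγ₂ hγ₂2.le x y)
  -- assemble
  rw [hL₁, hL₂]
  have hsplit : (x - P) - (y - Qy) = (Q - P) + ((x - y) - (Q - Qy)) := by abel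
  have hmain : ‖(x - P) - (y - Qy)‖ ≤ ‖Q - P‖ + (‖x - y‖ + ‖Q - Qy‖) := by
    rw [hsplit]
    exact le_trans (norm_add_le _ _) (add_le_add_right (norm_sub_le _ _) _)
  have e1 : |gam₁ - gam₂| / gam₁ * ‖u₁ - P‖
      ≤ |gam₁ - gam₂| / gam₁ * (2 * ‖x - xbar‖ + gam₁ * ‖B x‖) :=
    mul_le_mul_of_nonneg_left hu₁P (div_nonneg (abs_nonneg _) hγ₁.le)
  have e2 : |gam₁ - gam₂| / gam₁ * (2 * ‖x - xbar‖ + gam₁ * ‖B x‖)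
      = 2 * |gam₁ - gam₂| / gam₁ * ‖x - xbar‖ + |gam₁ - gam₂| * ‖B x‖ := by
    field_simp
  have key : 2 * |gam₁ - gam₂| ≤ 4 * β * |gam₁ - gam₂| / gam₁ := by
    rw [le_div_iff₀ hγ₁]
    nlinarith [abs_nonneg (gam₁ - gam₂)]
  have e3 : 2 * |gam₁ - gam₂| * ‖B x‖ ≤ 4 * β * |gam₁ - gam₂| / gam₁ * ‖B x‖ :=
    mul_le_mul_of_nonneg_right key (norm_nonneg _)
  linarith [norm_nonneg (x - y)]
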